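/- arXiv:0708.3147 — 6 statements merged into one kernel-verified Lean document; each statement's English description precedes it below -/
import Mathlib

section
/- Let M and N be linearly independent elements of su(1,1) (over ℝ). Then M, N, and [M,N] are linearly independent over ℝ if and only if q([M,N]) ≠ 0, where q(m₁K̄x + m₂K̄y + m₃K̄z) = m₁² + m₂² - m₃². -/
open Matrix Complex

noncomputable def Kx : Matrix (Fin 2) (Fin 2) ℂ := (1/2 : ℂ) • !![0, -Complex.I; Complex.I, 0]
noncomputable def Ky : Matrix (Fin 2) (Fin 2) ℂ := (1/2 : ℂ) • !![0, -1; -1, 0]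
noncomputable def Kz : Matrix (Fin 2) (Fin 2) ℂ := (1/2 : ℂ) • !![-Complex.I, 0; 0, Complex.I]

noncomputable def phi : (Fin 3 → ℝ) →ₗ[ℝ] Matrix (Fin 2) (Fin 2) ℂ where
  toFun v := v 0 • Kx + v 1 • Ky + v 2 • Kz
  map_add' u v := by simp [add_smul]; abel
  map_smul' c v := by simp [smul_smul, smul_add]

lemma phi_inj : Function.Injective phi := by
  rw [injective_iff_map_eq_zero]
  intro v hv
  have h : ∀ i j, (phi v) i j = 0 := by intro i j; rw [hv]; rfl
  have hz : v 2 = 0 := by simpa [phi, Kx, Ky, Kz, Complex.ext_iff] using h 0 0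
  have hxy := h 1 0
  simp [phi, Kx, Ky, Kz, Complex.ext_iff] at hxy
  funext i; fin_cases i <;> simp [hxy.1, hxy.2, hz]

lemma comb_eq (x y z : ℝ) : x • Kx + y • Ky + z • Kz =
    !![(-(z:ℂ)*I)/2, (-(x:ℂ)*I - y)/2; ((x:ℂ)*I - y)/2, (z:ℂ)*I/2] := by
  ext i j
  fin_cases i <;> fin_cases j <;>
    · simp [Kx, Ky, Kz, Complex.ext_iff]
      try constructor
      all_goals first | trivial | ring

theorem stmt5 (m₁ m₂ m₃ n₁ n₂ n₃ : ℝ)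
    (M N : Matrix (Fin 2) (Fin 2) ℂ)
    (hM : M = m₁ • Kx + m₂ • Ky + m₃ • Kz)
    (hN : N = n₁ • Kx + n₂ • Ky + n₃ • Kz)
    (hind : LinearIndependent ℝ ![M, N]) :
    LinearIndependent ℝ ![M, N, M * N - N * M] ↔
      (m₂*n₃ - m₃*n₂)^2 + (m₃*n₁ - m₁*n₃)^2 - (m₁*n₂ - m₂*n₁)^2 ≠ 0 := by
  set a := m₂*n₃ - m₃*n₂ with ha
  set b := m₃*n₁ - m₁*n₃ with hb
  set c := -(m₁*n₂ - m₂*n₁) with hc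
  have hP : M * N - N * M = a • Kx + b • Ky + c • Kz := by
    rw [hM, hN, comb_eq, comb_eq, comb_eq, Matrix.mul_fin_two, Matrix.mul_fin_two]
    ext i j
    fin_cases i <;> fin_cases j <;>
      · simp only [Matrix.sub_apply, ha, hb, hc]
        push_cast
        simp [Complex.ext_iff]
        constructor <;> ring
  set A : Matrix (Fin 3) (Fin 3) ℝ := !![m₁,m₂,m₃; n₁,n₂,n₃; a,b,c] with hA
  have key : ![M, N, M * N - N * M] = phi ∘ (fun i => A i) := by
    funext i
    fin_cases i
    · simpa [phi, hA] using hM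
    · simpa [phi, hA] using hN
    · simpa [phi, hA] using hP
  rw [key, LinearMap.linearIndependent_iff phi (LinearMap.ker_eq_bot.mpr phi_inj),
    show (fun i => A i) = A.row from rfl,
    Matrix.linearIndependent_rows_iff_isUnit, Matrix.isUnit_iff_isUnit_det, isUnit_iff_ne_zero]
  have hdet : A.det = a^2 + b^2 - (m₁*n₂ - m₂*n₁)^2 := by
    rw [Matrix.det_fin_three]; simp [hA, ha, hb, hc]; ring
  rw [hdet]
end

section
/- Let M and N be linearly independent elements of su(1,1). If q(M + uN) ≥ 0 for all real u and q([M,N]) ≠ 0, then q(M + uN) > 0 for all real u (i.e., M + uN is hyperbolic for each u ∈ ℝ). -/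
open Matrix Complex

theorem stmt6 (m₁ m₂ m₃ n₁ n₂ n₃ : ℝ)
    (M N : Matrix (Fin 2) (Fin 2) ℂ)
    (hM : M = m₁ • Kx + m₂ • Ky + m₃ • Kz)
    (hN : N = n₁ • Kx + n₂ • Ky + n₃ • Kz)
    (hind : LinearIndependent ℝ ![M, N])
    (hq : ∀ u : ℝ, (m₁ + u*n₁)^2 + (m₂ + u*n₂)^2 - (m₃ + u*n₃)^2 ≥ 0)
    (hcomm : (m₂*n₃ - m₃*n₂)^2 + (m₃*n₁ - m₁*n₃)^2 - (m₁*n₂ - m₂*n₁)^2 ≠ 0) :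
    ∀ u : ℝ, (m₁ + u*n₁)^2 + (m₂ + u*n₂)^2 - (m₃ + u*n₃)^2 > 0 := by
  set A := n₁^2 + n₂^2 - n₃^2 with hA
  set B := m₁*n₁ + m₂*n₂ - m₃*n₃ with hB
  set C := m₁^2 + m₂^2 - m₃^2 with hC
  have hdisc : discrim A (2*B) C ≤ 0 := by
    apply discrim_le_zero
    intro x
    have heq : A * (x*x) + 2*B * x + C
        = (m₁ + x*n₁)^2 + (m₂ + x*n₂)^2 - (m₃ + x*n₃)^2 := by
      rw [hA, hB, hC]; ring
    linarith [hq x, heq]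
  rw [discrim] at hdisc
  have hkey : (m₂*n₃ - m₃*n₂)^2 + (m₃*n₁ - m₁*n₃)^2 - (m₁*n₂ - m₂*n₁)^2
      = B^2 - A*C := by rw [hA, hB, hC]; ring
  rw [hkey] at hcomm
  have hlt : B^2 - A*C < 0 := lt_of_le_of_ne (by nlinarith) hcomm
  have hC0 : C ≥ 0 := by have := hq 0; nlinarith [this]
  have hA0 : A > 0 := by nlinarith [sq_nonneg B]
  intro u
  have hq' : (m₁ + u*n₁)^2 + (m₂ + u*n₂)^2 - (m₃ + u*n₃)^2
      = A*u^2 + 2*B*u + C := by rw [hA, hB, hC]; ring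
  rw [hq']
  nlinarith [sq_nonneg (A*u + B)]
end

section
/- For real numbers m₁, m₂, m₃, the matrix exponential exp(t·(m₁K̄x + m₂K̄y + m₃K̄z)) is a periodic function of t (with some positive period) if and only if m₁² + m₂² - m₃² < 0 or (m₁,m₂,m₃) = (0,0,0). -/
open Matrix Complex

section aux

attribute [local instance] Matrix.linftyOpNormedRing Matrix.linftyOpNormedAlgebra

lemma pow_idem {P : Matrix (Fin 2) (Fin 2) ℂ} (hP : P * P = P) : ∀ n, P ^ (n + 1) = P
  | 0 => pow_one P
  | n + 1 => by rw [pow_succ, pow_idem hP n, hP]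

lemma tsum_exp_tail (a : ℂ) :
    ∑' n : ℕ, (((n+1).factorial : ℂ))⁻¹ * a ^ (n + 1) = Complex.exp a - 1 := by
  have hs : Summable (fun n : ℕ => ((n.factorial : ℂ))⁻¹ * a ^ n) := by
    simpa [smul_eq_mul] using NormedSpace.expSeries_summable' (𝕂 := ℂ) a
  have he : Complex.exp a = ∑' n : ℕ, ((n.factorial : ℂ))⁻¹ * a ^ n := by
    rw [Complex.exp_eq_exp_ℂ, NormedSpace.exp_eq_tsum (𝕂 := ℂ)]
    simp [smul_eq_mul]
  rw [he, Summable.tsum_eq_zero_add hs]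
  simp

set_option maxHeartbeats 1000000 in
lemma exp_smul_idem (P : Matrix (Fin 2) (Fin 2) ℂ) (hP : P * P = P) (a : ℂ) :
    NormedSpace.exp (a • P) = 1 + (Complex.exp a - 1) • P := by
  have hs : Summable (fun n : ℕ => ((n.factorial : ℂ))⁻¹ • (a • P) ^ n) :=
    NormedSpace.expSeries_summable' (𝕂 := ℂ) (a • P)
  simp only [NormedSpace.exp_eq_tsum (𝕂 := ℂ)]
  rw [Summable.tsum_eq_zero_add hs]
  have h1 : ∀ n : ℕ, (((n+1).factorial : ℂ))⁻¹ • (a • P) ^ (n + 1)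
      = ((((n+1).factorial : ℂ))⁻¹ * a ^ (n + 1)) • P := by
    intro n
    rw [smul_pow, pow_idem hP, smul_smul]
  have hs2 : Summable (fun n : ℕ => (((n+1).factorial : ℂ))⁻¹ * a ^ (n + 1)) := by
    exact (summable_nat_add_iff (f := fun n : ℕ => ((n.factorial : ℂ))⁻¹ * a ^ n) 1).mpr
      (by simpa [smul_eq_mul] using NormedSpace.expSeries_summable' (𝕂 := ℂ) a)
  rw [tsum_congr h1, Summable.tsum_smul_const hs2, tsum_exp_tail]
  simp

lemma exp_sq_zero (N : Matrix (Fin 2) (Fin 2) ℂ) (hN : N * N = 0) :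
    NormedSpace.exp N = 1 + N := by
  simp only [NormedSpace.exp_eq_tsum (𝕂 := ℂ)]
  have h0 : ∀ n ∉ ({0, 1} : Finset ℕ), ((n.factorial : ℂ))⁻¹ • N ^ n = 0 := by
    intro n hn
    have : 2 ≤ n := by
      simp only [Finset.mem_insert, Finset.mem_singleton] at hn
      omega
    obtain ⟨k, rfl⟩ := Nat.exists_eq_add_of_le this
    rw [pow_add, pow_two, hN, zero_mul, smul_zero]
  rw [tsum_eq_sum h0]
  simp [Finset.sum_insert]

lemma exp_of_sq (N : Matrix (Fin 2) (Fin 2) ℂ) (a : ℂ) (ha : a ≠ 0)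
    (hN : N * N = (a ^ 2) • 1) :
    NormedSpace.exp N
      = Complex.exp a • ((2 : ℂ)⁻¹ • (1 : Matrix (Fin 2) (Fin 2) ℂ) + (2 * a)⁻¹ • N)
        + Complex.exp (-a) • (1 - ((2 : ℂ)⁻¹ • (1 : Matrix (Fin 2) (Fin 2) ℂ) + (2 * a)⁻¹ • N)) := by
  obtain ⟨P, hPdef⟩ : ∃ P : Matrix (Fin 2) (Fin 2) ℂ, P = (2 : ℂ)⁻¹ • 1 + (2 * a)⁻¹ • N := ⟨_, rfl⟩
  rw [← hPdef]
  have hP : P * P = P := by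
    simp only [hPdef, add_mul, mul_add, smul_mul_smul_comm, one_mul, mul_one, hN, smul_smul]
    match_scalars <;> field_simp <;> ring_nf
  have hQ : (1 - P) * (1 - P) = 1 - P := by
    simp [mul_sub, sub_mul, hP]
  have hPQ : P * (1 - P) = 0 := by simp [mul_sub, hP]
  have hNdecomp : N = a • P + (-a) • (1 - P) := by
    rw [hPdef]
    match_scalars <;> field_simp <;> ring
  have hcomm : Commute (a • P) ((-a) • (1 - P)) := by
    apply Commute.smul_left
    apply Commute.smul_right
    have : P * (1 - P) = (1 - P) * P := by
      simp [mul_sub, sub_mul, hP]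
    exact this
  calc NormedSpace.exp N = NormedSpace.exp (a • P + (-a) • (1 - P)) := by rw [← hNdecomp]
    _ = NormedSpace.exp (a • P) * NormedSpace.exp ((-a) • (1 - P)) :=
        Matrix.exp_add_of_commute _ _ hcomm
    _ = (1 + (Complex.exp a - 1) • P) * (1 + (Complex.exp (-a) - 1) • (1 - P)) := by
        rw [exp_smul_idem P hP, exp_smul_idem _ hQ]
    _ = Complex.exp a • P + Complex.exp (-a) • (1 - P) := by
        rw [mul_add, add_mul, add_mul, smul_mul_smul_comm, hPQ, smul_zero]
        simp only [one_mul, mul_one]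
        module

lemma M_sq (m₁ m₂ m₃ : ℝ) (M : Matrix (Fin 2) (Fin 2) ℂ)
    (hM : M = m₁ • Kx + m₂ • Ky + m₃ • Kz) :
    M * M = (((m₁^2 + m₂^2 - m₃^2 : ℝ) : ℂ) / 4) • 1 := by
  subst hM
  ext i j
  fin_cases i <;> fin_cases j <;>
    simp [Kx, Ky, Kz, Matrix.mul_apply, Fin.sum_univ_two, Matrix.one_apply,
      Complex.ext_iff, ← Complex.ofReal_pow] <;>
    norm_num <;> constructor <;> ring

lemma real_smul_M (r : ℝ) (A : Matrix (Fin 2) (Fin 2) ℂ) : r • A = (r : ℂ) • A := by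
  rw [← algebraMap_smul ℂ r A, Complex.coe_algebraMap]

lemma entries_of_M_eq_zero (m₁ m₂ m₃ : ℝ)
    (hM : m₁ • Kx + m₂ • Ky + m₃ • Kz = (0 : Matrix (Fin 2) (Fin 2) ℂ)) :
    m₁ = 0 ∧ m₂ = 0 ∧ m₃ = 0 := by
  have h00 := congrFun (congrFun hM 0) 0
  have h01 := congrFun (congrFun hM 0) 1
  simp [Kx, Ky, Kz, Complex.ext_iff] at h00 h01
  exact ⟨h01.2, h01.1, h00⟩

end aux


theorem stmt7 (m₁ m₂ m₃ : ℝ)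
    (M : Matrix (Fin 2) (Fin 2) ℂ)
    (hM : M = m₁ • Kx + m₂ • Ky + m₃ • Kz) :
    (∃ T : ℝ, T > 0 ∧ ∀ t : ℝ,
        NormedSpace.exp ((t + T) • M) = NormedSpace.exp (t • M)) ↔
      (m₁^2 + m₂^2 - m₃^2 < 0 ∨ (m₁ = 0 ∧ m₂ = 0 ∧ m₃ = 0)) := by
  have key := M_sq m₁ m₂ m₃ M hM
  constructor
  · rintro ⟨T, hT, hexp⟩
    have h1 : NormedSpace.exp ((T:ℂ) • M) = 1 := by
      have h0 := hexp 0
      rw [zero_add, zero_smul, NormedSpace.exp_zero, real_smul_M] at h0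
      exact h0
    rcases lt_trichotomy (m₁^2 + m₂^2 - m₃^2) 0 with hd | hd | hd
    · exact Or.inl hd
    · -- d = 0 case
      right
      have hMM : M * M = 0 := by rw [key, hd]; simp
      have hsq : ((T:ℂ) • M) * ((T:ℂ) • M) = 0 := by
        rw [smul_mul_smul_comm, hMM, smul_zero]
      rw [exp_sq_zero _ hsq] at h1
      have hTM : (T:ℂ) • M = 0 := by
        have h2 : (1 : Matrix (Fin 2) (Fin 2) ℂ) + (T:ℂ) • M - 1 = 1 - 1 := by rw [h1]
        simpa using h2
      have hM0 : M = 0 := by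
        rcases smul_eq_zero.mp hTM with h | h
        · exact absurd (Complex.ofReal_eq_zero.mp h) (ne_of_gt hT)
        · exact h
      exact entries_of_M_eq_zero m₁ m₂ m₃ (by rw [← hM, hM0])
    · -- d > 0 case : contradiction
      exfalso
      have hds : (0:ℝ) < Real.sqrt (m₁^2 + m₂^2 - m₃^2) := Real.sqrt_pos.mpr hd
      set aR : ℝ := Real.sqrt (m₁^2 + m₂^2 - m₃^2) * T / 2 with haR
      have haRpos : 0 < aR := by positivity
      have ha : (aR : ℂ) ≠ 0 := by exact_mod_cast ne_of_gt haRpos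
      have hsq : ((T:ℂ) • M) * ((T:ℂ) • M) = ((aR:ℂ)^2) • 1 := by
        rw [smul_mul_smul_comm, key, smul_smul]
        congr 1
        have h2 : Real.sqrt (m₁^2 + m₂^2 - m₃^2) ^ 2 = m₁^2 + m₂^2 - m₃^2 :=
          Real.sq_sqrt hd.le
        have : aR^2 = T^2 * ((m₁^2 + m₂^2 - m₃^2)/4) := by
          rw [haR]; rw [div_pow, mul_pow, h2]; ring
        have hc := congrArg (Complex.ofReal) this
        push_cast
        push_cast at hc
        linear_combination -hc
      have hbig := exp_of_sq _ _ ha hsq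
      rw [h1] at hbig
      have h01 := congrFun (congrFun hbig 0) 1
      have hMentry : M 0 1 = (m₁:ℂ) * (-Complex.I/2) + (m₂:ℂ) * (-1/2) := by
        rw [hM]; simp [Kx, Ky, Kz]; ring
      simp only [Matrix.add_apply, Matrix.smul_apply, Matrix.sub_apply, Matrix.one_apply,
        smul_eq_mul] at h01
      norm_num at h01
      have hfac : (Complex.exp ((aR:ℝ):ℂ) - Complex.exp (-((aR:ℝ):ℂ))) * ((2 * ((aR:ℝ):ℂ))⁻¹ * ((T:ℂ) * M 0 1)) = 0 := by
        linear_combination -h01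
      have hne : Complex.exp (((aR:ℝ):ℂ)) - Complex.exp (-((aR:ℝ):ℂ)) ≠ 0 := by
        rw [sub_ne_zero, ← Complex.ofReal_neg, ← Complex.ofReal_exp, ← Complex.ofReal_exp]
        exact_mod_cast (Real.exp_lt_exp.mpr (by linarith : -aR < aR)).ne'
      have h2a : (2 * ((aR:ℝ):ℂ)) ≠ 0 := by simpa using ha
      have hTne : (T:ℂ) ≠ 0 := by exact_mod_cast ne_of_gt hT
      have hM01 : M 0 1 = 0 := by
        rcases mul_eq_zero.mp hfac with h | h
        · exact absurd h hne
        · rcases mul_eq_zero.mp h with h' | h'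
          · exact absurd h' (inv_ne_zero h2a)
          · rcases mul_eq_zero.mp h' with h'' | h''
            · exact absurd h'' hTne
            · exact h''
      rw [hMentry] at hM01
      have hm12 : m₁ = 0 ∧ m₂ = 0 := by
        rw [Complex.ext_iff] at hM01
        simp at hM01
        constructor <;> linarith [hM01.1, hM01.2]
      nlinarith [hm12.1, hm12.2, sq_nonneg m₃]
  · rintro (hd | ⟨hm1, hm2, hm3⟩)
    · -- periodic with period 4π/√(-d)
      have hωpos : (0:ℝ) < Real.sqrt (-(m₁^2 + m₂^2 - m₃^2)) := Real.sqrt_pos.mpr (by linarith)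
      set ω : ℝ := Real.sqrt (-(m₁^2 + m₂^2 - m₃^2)) with hω
      have hω2 : ω^2 = -(m₁^2 + m₂^2 - m₃^2) := Real.sq_sqrt (by linarith)
      refine ⟨4 * Real.pi / ω, by positivity, fun t => ?_⟩
      have ha : (2 * (Real.pi:ℂ) * Complex.I) ≠ 0 := by
        simp [Real.pi_ne_zero, Complex.I_ne_zero]
      have hsq : (((4 * Real.pi / ω : ℝ):ℂ) • M) * (((4 * Real.pi / ω : ℝ):ℂ) • M)
          = ((2 * (Real.pi:ℂ) * Complex.I)^2) • 1 := by
        rw [smul_mul_smul_comm, key, smul_smul]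
        congr 1
        have hI : (2 * (Real.pi:ℂ) * Complex.I)^2 = -(4 * (Real.pi:ℂ)^2) := by
          rw [mul_pow, mul_pow, Complex.I_sq]; ring
        rw [hI]
        have hωne : ω ≠ 0 := ne_of_gt hωpos
        have hd' : m₁^2 + m₂^2 - m₃^2 = -ω^2 := by linarith [hω2]
        have hr : (4 * Real.pi / ω)^2 * ((m₁^2 + m₂^2 - m₃^2)/4) = -(4 * Real.pi^2) := by
          rw [div_pow, hd']
          field_simp
        have hc := congrArg (Complex.ofReal) hr
        push_cast
        push_cast at hc
        linear_combination hc
      have hexpT : NormedSpace.exp (((4 * Real.pi / ω : ℝ):ℂ) • M) = 1 := by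
        rw [exp_of_sq _ _ ha hsq]
        have he1 : Complex.exp (2 * (Real.pi:ℂ) * Complex.I) = 1 := Complex.exp_two_pi_mul_I
        have he2 : Complex.exp (-(2 * (Real.pi:ℂ) * Complex.I)) = 1 := by
          rw [Complex.exp_neg, he1]; simp
        rw [he1, he2]
        simp
      have hcomm : Commute ((t:ℂ) • M) (((4 * Real.pi / ω : ℝ):ℂ) • M) :=
        ((Commute.refl M).smul_left _).smul_right _
      rw [add_smul, real_smul_M, real_smul_M, Matrix.exp_add_of_commute _ _ hcomm, hexpT,
        mul_one, ← real_smul_M]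
    · refine ⟨1, one_pos, fun t => ?_⟩
      have : M = 0 := by rw [hM, hm1, hm2, hm3]; simp
      rw [this]
      simp
end

section
/- Let X(t) = [[x₁+ix₂, x₃-ix₄],[x₃+ix₄, x₁-ix₂]] (with real functions x₁,...,x₄) solve the ODE X'(t) = (ε K̄x + a K̄z + u(t) K̄y) X(t) for a locally integrable (or continuous) real control u, with ε = 1 and |a| < 1. Then the function t ↦ (x₁(t)-x₄(t))² - (x₂(t)-x₃(t))² is nonincreasing along every trajectory. -/
theorem stmt13 (a : ℝ) (ha : |a| < 1) (u x₁ x₂ x₃ x₄ : ℝ → ℝ)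
    (h₁ : ∀ t, HasDerivAt x₁ ((a * x₂ t + x₄ t - u t * x₃ t) / 2) t)
    (h₂ : ∀ t, HasDerivAt x₂ ((-(a * x₁ t) - x₃ t - u t * x₄ t) / 2) t)
    (h₃ : ∀ t, HasDerivAt x₃ ((-(a * x₄ t) - x₂ t - u t * x₁ t) / 2) t)
    (h₄ : ∀ t, HasDerivAt x₄ ((a * x₃ t + x₁ t - u t * x₂ t) / 2) t) :
    Antitone (fun t => (x₁ t - x₄ t)^2 - (x₂ t - x₃ t)^2) := by
  obtain ⟨ha1, ha2⟩ := abs_lt.mp ha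
  have hf : ∀ t, HasDerivAt (fun t => (x₁ t - x₄ t)^2 - (x₂ t - x₃ t)^2)
      ((2 : ℕ) * (x₁ t - x₄ t) ^ 1 *
        ((a * x₂ t + x₄ t - u t * x₃ t) / 2 - (a * x₃ t + x₁ t - u t * x₂ t) / 2)
       - (2 : ℕ) * (x₂ t - x₃ t) ^ 1 *
        ((-(a * x₁ t) - x₃ t - u t * x₄ t) / 2 - (-(a * x₄ t) - x₂ t - u t * x₁ t) / 2)) t := by
    intro t
    exact (((h₁ t).sub (h₄ t)).pow 2).sub (((h₂ t).sub (h₃ t)).pow 2)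
  apply antitone_of_deriv_nonpos
  · exact fun t => ((hf t).differentiableAt)
  · intro t
    rw [(hf t).deriv]
    set p := x₁ t - x₄ t
    set q := x₂ t - x₃ t
    have h1 : (0:ℝ) ≤ (1 - a) * (p + q)^2 := mul_nonneg (by linarith) (sq_nonneg _)
    have h2 : (0:ℝ) ≤ (1 + a) * (p - q)^2 := mul_nonneg (by linarith) (sq_nonneg _)
    simp only [p, q] at h1 h2 ⊢
    push_cast
    nlinarith [h1, h2]
end

section
/- Let X(t) = [[x₁+ix₂, x₃-ix₄],[x₃+ix₄, x₁-ix₂]] solve X'(t) = (K̄x + u(t)K̄z)X(t) with X(0) = I and |u(t)| ≤ 1 for all t. Then (x₁(t)-x₄(t))² - (x₂(t)-x₃(t))² ≤ 1 for all t ≥ 0; consequently the reachable set of this system is a proper subset of SU(1,1). -/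
theorem stmt14 (u x₁ x₂ x₃ x₄ : ℝ → ℝ)
    (hu : ∀ t, |u t| ≤ 1)
    (h₁ : ∀ t, HasDerivAt x₁ ((u t * x₂ t + x₄ t) / 2) t)
    (h₂ : ∀ t, HasDerivAt x₂ ((-(u t * x₁ t) - x₃ t) / 2) t)
    (h₃ : ∀ t, HasDerivAt x₃ ((-(u t * x₄ t) - x₂ t) / 2) t)
    (h₄ : ∀ t, HasDerivAt x₄ ((u t * x₃ t + x₁ t) / 2) t)
    (hinit : x₁ 0 = 1 ∧ x₂ 0 = 0 ∧ x₃ 0 = 0 ∧ x₄ 0 = 0) :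
    ∀ t ≥ 0, (x₁ t - x₄ t)^2 - (x₂ t - x₃ t)^2 ≤ 1 := by
  set V : ℝ → ℝ := fun t => (x₁ t - x₄ t)^2 - (x₂ t - x₃ t)^2 with hVdef
  have hV : ∀ t, HasDerivAt V
      (2 * (x₁ t - x₄ t) * ((u t * x₂ t + x₄ t) / 2 - (u t * x₃ t + x₁ t) / 2)
        - 2 * (x₂ t - x₃ t) * ((-(u t * x₁ t) - x₃ t) / 2 - (-(u t * x₄ t) - x₂ t) / 2)) t := by
    intro t
    have ha := ((h₁ t).sub (h₄ t))
    have hb := ((h₂ t).sub (h₃ t))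
    have ha2 : HasDerivAt (fun t => (x₁ t - x₄ t)^2)
        (2 * (x₁ t - x₄ t) * ((u t * x₂ t + x₄ t) / 2 - (u t * x₃ t + x₁ t) / 2)) t := by
      have := ha.pow 2
      simpa [Pi.pow_def, Pi.sub_def, mul_comm, mul_assoc, mul_left_comm] using this
    have hb2 : HasDerivAt (fun t => (x₂ t - x₃ t)^2)
        (2 * (x₂ t - x₃ t) * ((-(u t * x₁ t) - x₃ t) / 2 - (-(u t * x₄ t) - x₂ t) / 2)) t := by
      have := hb.pow 2
      simpa [Pi.pow_def, Pi.sub_def, mul_comm, mul_assoc, mul_left_comm] using this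
    exact ha2.sub hb2
  have hderiv : ∀ t, deriv V t ≤ 0 := by
    intro t
    rw [(hV t).deriv]
    have h := hu t
    have hu2 : (u t)^2 ≤ 1 := by
      have := abs_le.mp h
      nlinarith [this.1, this.2]
    nlinarith [sq_nonneg (u t * (x₁ t - x₄ t) - (x₂ t - x₃ t)),
      sq_nonneg (x₁ t - x₄ t), mul_nonneg (sub_nonneg.mpr hu2) (sq_nonneg (x₁ t - x₄ t))]
  have hanti : Antitone V :=
    antitone_of_deriv_nonpos (fun t => (hV t).differentiableAt) hderiv
  intro t ht
  have := hanti ht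
  obtain ⟨e1, e2, e3, e4⟩ := hinit
  have h0 : V 0 = 1 := by simp [hVdef, e1, e2, e3, e4]
  calc V t ≤ V 0 := this
    _ = 1 := h0
end

section
/- If A, B ∈ su(1,1) and [A,B] is parabolic (i.e., q([A,B]) = 0), then the Lie algebra generated by {A, B} is contained in span{A, B}, hence has real dimension at most 2 and is a proper Lie subalgebra of su(1,1). -/
open Matrix Complex

attribute [local instance 100] LieRing.ofAssociativeRing

lemma key15 (a₁ a₂ a₃ b₁ b₂ b₃ : ℝ)
    (hpar : (a₂*b₃ - a₃*b₂)^2 + (a₃*b₁ - a₁*b₃)^2 - (a₁*b₂ - a₂*b₁)^2 = 0) :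
    ∃ s t : ℝ, a₂*b₃ - a₃*b₂ = s*a₁ + t*b₁ ∧ a₃*b₁ - a₁*b₃ = s*a₂ + t*b₂ ∧
      -(a₁*b₂ - a₂*b₁) = s*a₃ + t*b₃ := by
  by_cases h3 : a₁*b₂ - a₂*b₁ = 0
  · by_cases h1 : a₂*b₃ - a₃*b₂ = 0
    · by_cases h2 : a₃*b₁ - a₁*b₃ = 0
      · exact ⟨0, 0, by linarith, by linarith, by linarith⟩
      · refine ⟨((-(a₁*b₂-a₂*b₁))*b₁ - (a₂*b₃-a₃*b₂)*b₃)/(a₃*b₁-a₁*b₃),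
          (a₃*(a₂*b₃-a₃*b₂) - a₁*(-(a₁*b₂-a₂*b₁)))/(a₃*b₁-a₁*b₃), ?_, ?_, ?_⟩
        · rw [div_mul_eq_mul_div, div_mul_eq_mul_div, ← add_div, eq_div_iff h2]; ring
        · field_simp; nlinarith [hpar]
        · rw [div_mul_eq_mul_div, div_mul_eq_mul_div, ← add_div, eq_div_iff h2]; ring
    · refine ⟨((a₃*b₁-a₁*b₃)*b₃ - (-(a₁*b₂-a₂*b₁))*b₂)/(a₂*b₃-a₃*b₂),
        (a₂*(-(a₁*b₂-a₂*b₁)) - a₃*(a₃*b₁-a₁*b₃))/(a₂*b₃-a₃*b₂), ?_, ?_, ?_⟩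
      · field_simp; nlinarith [hpar]
      · rw [div_mul_eq_mul_div, div_mul_eq_mul_div, ← add_div, eq_div_iff h1]; ring
      · rw [div_mul_eq_mul_div, div_mul_eq_mul_div, ← add_div, eq_div_iff h1]; ring
  · refine ⟨((a₂*b₃-a₃*b₂)*b₂ - (a₃*b₁-a₁*b₃)*b₁)/(a₁*b₂-a₂*b₁),
      (a₁*(a₃*b₁-a₁*b₃) - a₂*(a₂*b₃-a₃*b₂))/(a₁*b₂-a₂*b₁), ?_, ?_, ?_⟩
    · rw [div_mul_eq_mul_div, div_mul_eq_mul_div, ← add_div, eq_div_iff h3]; ring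
    · rw [div_mul_eq_mul_div, div_mul_eq_mul_div, ← add_div, eq_div_iff h3]; ring
    · field_simp; nlinarith [hpar]

set_option maxHeartbeats 1000000 in
theorem stmt15 (a₁ a₂ a₃ b₁ b₂ b₃ : ℝ)
    (A B : Matrix (Fin 2) (Fin 2) ℂ)
    (hA : A = a₁ • Kx + a₂ • Ky + a₃ • Kz)
    (hB : B = b₁ • Kx + b₂ • Ky + b₃ • Kz)
    (hpar : (a₂*b₃ - a₃*b₂)^2 + (a₃*b₁ - a₁*b₃)^2 - (a₁*b₂ - a₂*b₁)^2 = 0) :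
    ∀ M ∈ LieSubalgebra.lieSpan ℝ (Matrix (Fin 2) (Fin 2) ℂ) {A, B},
      M ∈ Submodule.span ℝ ({A, B} : Set (Matrix (Fin 2) (Fin 2) ℂ)) := by
  obtain ⟨s, t, h1, h2, h3⟩ := key15 a₁ a₂ a₃ b₁ b₂ b₃ hpar
  have hcomm : ⁅A, B⁆ = (a₂*b₃-a₃*b₂) • Kx + (a₃*b₁-a₁*b₃) • Ky + (-(a₁*b₂-a₂*b₁)) • Kz := by
    subst hA hB
    ext i j
    fin_cases i <;> fin_cases j <;>
      simp [Ring.lie_def, Kx, Ky, Kz, Matrix.mul_apply, Fin.sum_univ_two, Matrix.smul_apply,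
        Matrix.add_apply, Matrix.sub_apply, Complex.real_smul, smul_eq_mul] <;>
      push_cast <;> ring_nf <;> simp [Complex.I_sq] <;> ring
  have hcomm2 : ⁅A, B⁆ = s • A + t • B := by
    rw [hcomm, hA, hB, h1, h2, h3]
    module
  have hP : ∀ x y : Matrix (Fin 2) (Fin 2) ℂ,
      x ∈ Submodule.span ℝ ({A, B} : Set (Matrix (Fin 2) (Fin 2) ℂ)) →
      y ∈ Submodule.span ℝ ({A, B} : Set (Matrix (Fin 2) (Fin 2) ℂ)) →
      ⁅x, y⁆ ∈ Submodule.span ℝ ({A, B} : Set (Matrix (Fin 2) (Fin 2) ℂ)) := by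
    intro x y hx hy
    obtain ⟨p, q, rfl⟩ := Submodule.mem_span_pair.mp hx
    obtain ⟨r, u, rfl⟩ := Submodule.mem_span_pair.mp hy
    refine Submodule.mem_span_pair.mpr ⟨(p*u-q*r)*s, (p*u-q*r)*t, ?_⟩
    have e : ⁅p•A+q•B, r•A+u•B⁆ = (p*u-q*r) • ⁅A,B⁆ := by
      simp only [lie_add, add_lie, smul_lie, lie_smul, lie_self, smul_zero, zero_add,
        add_zero, smul_smul, ← lie_skew B A, smul_neg]
      module
    rw [e, hcomm2]
    module
  let P : LieSubalgebra ℝ (Matrix (Fin 2) (Fin 2) ℂ) :=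
    { Submodule.span ℝ ({A, B} : Set (Matrix (Fin 2) (Fin 2) ℂ)) with
      lie_mem' := fun {x y} hx hy => hP x y hx hy }
  intro M hM
  have hle : LieSubalgebra.lieSpan ℝ (Matrix (Fin 2) (Fin 2) ℂ) {A, B} ≤ P := by
    rw [LieSubalgebra.lieSpan_le]
    intro z hz
    rcases hz with rfl | hz
    · exact Submodule.subset_span (Set.mem_insert _ _)
    · rcases hz with rfl
      exact Submodule.subset_span (Set.mem_insert_iff.mpr (Or.inr rfl))
  exact hle hM
end
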